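/- Sunrise-type rearrangement inequality: let 0 < a < s < n and let f be a measurable function on ℝ^n with ∫_0^∞ f^*(r) r^{s/n - 1} dr < ∞. Then ∫_0^∞ (f^*(r) r^{(s-a)/n})^*(y) y^{a/n - 1} dy ≤ (C(n)/a) ∫_0^∞ f^*(r) r^{s/n - 1} dr, where (f^*(r) r^{(s-a)/n})^* denotes the nonincreasing rearrangement (over (0,∞)) of the function r ↦ f^*(r) r^{(s-a)/n}, and C(n) depends only on n. -/

import Mathlib

open MeasureTheory Set Filter intervalIntegral
open scoped ENNReal Topology

/-- A subset of `(0,∞)` that is downward closed within `(0,∞)` is measurable. -/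
lemma measurableSet_of_dc {S : Set ℝ} (hS : S ⊆ Ioi 0)
    (hdc : ∀ x ∈ S, ∀ z : ℝ, 0 < z → z ≤ x → z ∈ S) : MeasurableSet S := by
  rcases S.eq_empty_or_nonempty with h | hne
  · simp [h]
  by_cases hb : BddAbove S
  · set u := sSup S with hu
    by_cases huS : u ∈ S
    · have : S = Ioc 0 u := by
        apply Subset.antisymm
        · intro x hx; exact ⟨hS hx, le_csSup hb hx⟩
        · intro x hx; exact hdc u huS x hx.1 hx.2
      rw [this]; exact measurableSet_Ioc
    · have : S = Ioo 0 u := by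
        apply Subset.antisymm
        · intro x hx
          refine ⟨hS hx, lt_of_le_of_ne (le_csSup hb hx) ?_⟩
          rintro rfl; exact huS hx
        · intro x hx
          obtain ⟨y, hyS, hxy⟩ := exists_lt_of_lt_csSup hne hx.2
          exact hdc y hyS x hx.1 hxy.le
      rw [this]; exact measurableSet_Ioo
  · have : S = Ioi 0 := by
      apply Subset.antisymm hS
      intro x hx
      obtain ⟨y, hyS, hxy⟩ := not_bddAbove_iff.1 hb x
      exact hdc y hyS x hx hxy.le
    rw [this]; exact measurableSet_Ioi

/-- The indicator of a nonnegative function antitone on `(0,∞)` is measurable. -/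
lemma measurable_indicator_antitoneOn {T : ℝ → ℝ} (h0 : ∀ y, 0 ≤ T y)
    (hT : AntitoneOn T (Ioi 0)) : Measurable ((Ioi (0:ℝ)).indicator T) := by
  apply measurable_of_Ioi
  intro c
  rcases lt_or_ge c 0 with hc | hc
  · have : ((Ioi (0:ℝ)).indicator T) ⁻¹' Ioi c = univ := by
      ext y; simp only [mem_preimage, mem_Ioi, mem_univ, iff_true]
      refine lt_of_lt_of_le hc ?_
      by_cases hy : y ∈ Ioi (0:ℝ)
      · simp [indicator_of_mem hy, h0 y]
      · simp [indicator_of_notMem hy]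
    rw [this]; exact MeasurableSet.univ
  · have hset : ((Ioi (0:ℝ)).indicator T) ⁻¹' Ioi c = {y ∈ Ioi (0:ℝ) | c < T y} := by
      ext y
      by_cases hy : y ∈ Ioi (0:ℝ)
      · simp only [mem_preimage, mem_Ioi, indicator_of_mem hy, mem_setOf_eq]
        exact ⟨fun h => ⟨hy, h⟩, fun h => h.2⟩
      · simp only [mem_preimage, mem_Ioi, indicator_of_notMem hy, mem_setOf_eq]
        constructor
        · intro h; exact absurd (lt_of_le_of_lt hc h) (lt_irrefl 0)
        · rintro ⟨h, -⟩; exact absurd h hy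
    rw [hset]
    apply measurableSet_of_dc (fun y hy => hy.1)
    rintro x ⟨hx, hcx⟩ z hz hzx
    exact ⟨hz, lt_of_lt_of_le hcx (hT hz hx hzx)⟩

/-- Generic antitonicity of the abstract rearrangement. -/
lemma antitoneOn_rearrGen {X : Type*} [MeasurableSpace X] (μ : Measure X) (g : X → ℝ)
    (hA : ∀ r : ℝ, NullMeasurableSet {y | r < |g y|} μ) :
    AntitoneOn (fun t => sInf {r : ℝ | 0 ≤ r ∧ μ {y | r < |g y|} < ENNReal.ofReal t})
      (Ioi 0) := by
  intro t₁ ht₁ t₂ ht₂ h12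
  set S : ℝ → Set ℝ := fun t => {r : ℝ | 0 ≤ r ∧ μ {y | r < |g y|} < ENNReal.ofReal t} with hS
  rcases (S t₁).eq_empty_or_nonempty with hemp | hne
  · have hinf : ∀ r : ℝ, μ {y | r < |g y|} = ∞ := by
      by_contra hcon
      push_neg at hcon
      obtain ⟨r₀, hr₀⟩ := hcon
      set B : ℕ → Set X := fun m => {y | max r₀ 0 + m < |g y|} with hB
      have hBanti : Antitone B := by
        intro i j hij y hy
        simp only [hB, mem_setOf_eq] at hy ⊢
        refine lt_of_le_of_lt ?_ hy
        have : (i:ℝ) ≤ j := Nat.cast_le.2 hij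
        linarith
      have hBfin : ∃ i, μ (B i) ≠ ∞ := by
        refine ⟨0, ?_⟩
        have : B 0 ⊆ {y | r₀ < |g y|} := by
          intro y hy
          simp only [hB, Nat.cast_zero, add_zero, mem_setOf_eq] at hy ⊢
          exact lt_of_le_of_lt (le_max_left _ _) hy
        exact fun h => hr₀ (top_le_iff.1 (h ▸ measure_mono this))
      have hBempty : ⋂ m, B m = ∅ := by
        ext y
        simp only [mem_iInter, mem_empty_iff_false, iff_false, not_forall, hB, mem_setOf_eq]
        obtain ⟨m, hm⟩ := exists_nat_gt (|g y| - max r₀ 0)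
        exact ⟨m, by push_neg; linarith⟩
      have htd := tendsto_measure_iInter_atTop (fun m => hA _) hBanti hBfin
      rw [hBempty, measure_empty] at htd
      have hlb : ∀ m : ℕ, ENNReal.ofReal t₁ ≤ μ (B m) := by
        intro m
        by_contra hlt
        push_neg at hlt
        have : (max r₀ 0 + m) ∈ S t₁ := ⟨by positivity, hlt⟩
        rw [hemp] at this; exact this
      have : ENNReal.ofReal t₁ ≤ 0 := ge_of_tendsto' htd hlb
      have ht1pos : (0:ℝ≥0∞) < ENNReal.ofReal t₁ := ENNReal.ofReal_pos.2 ht₁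
      exact absurd (lt_of_lt_of_le ht1pos this) (lt_irrefl _)
    have hemp2 : S t₂ = ∅ := by
      ext r
      simp only [hS, mem_setOf_eq, mem_empty_iff_false, iff_false, not_and]
      intro _
      rw [hinf r]
      exact fun h => absurd h (by simp)
    simp only [hS] at hemp hemp2 ⊢
    rw [hemp, hemp2]
  · apply csInf_le_csInf ⟨0, fun x hx => hx.1⟩ hne
    intro r hr
    exact ⟨hr.1, lt_of_lt_of_le hr.2 (ENNReal.ofReal_le_ofReal h12)⟩

lemma tsum_rpow_le {ι : Type*} [Countable ι] (g : ι → ℝ≥0∞) {p : ℝ} (hp : 0 < p) (hp1 : p ≤ 1) :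
    (∑' k, g k) ^ p ≤ ∑' k, (g k) ^ p := by
  have hfin : ∀ s : Finset ι, (∑ k ∈ s, g k) ^ p ≤ ∑' k, (g k) ^ p := by
    intro s
    refine le_trans ?_ (ENNReal.sum_le_tsum s)
    induction s using Finset.cons_induction with
    | empty => simp [ENNReal.zero_rpow_of_pos hp]
    | cons a s ha ih =>
        rw [Finset.sum_cons, Finset.sum_cons]
        exact le_trans (ENNReal.rpow_add_le_add_rpow _ _ hp.le hp1)
          (add_le_add_right ih _)
  rw [ENNReal.tsum_eq_iSup_sum]
  have : (⨆ s : Finset ι, ∑ k ∈ s, g k) ≤ (∑' k, (g k) ^ p) ^ p⁻¹ := by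
    apply iSup_le
    intro s
    have := ENNReal.rpow_le_rpow (hfin s) (by positivity : (0:ℝ) ≤ p⁻¹)
    rwa [← ENNReal.rpow_mul, mul_inv_cancel₀ hp.ne', ENNReal.rpow_one] at this
  calc (⨆ s : Finset ι, ∑ k ∈ s, g k) ^ p
      ≤ ((∑' k, (g k) ^ p) ^ p⁻¹) ^ p := ENNReal.rpow_le_rpow this hp.le
    _ = ∑' k, (g k) ^ p := by
        rw [← ENNReal.rpow_mul, inv_mul_cancel₀ hp.ne', ENNReal.rpow_one]

lemma lint_rpow {β : ℝ} (hβ : 0 < β) {u v : ℝ} (hu : 0 ≤ u) (huv : u ≤ v) :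
    ∫⁻ y in Ioc u v, ENNReal.ofReal (y ^ (β - 1)) =
      ENNReal.ofReal ((v ^ β - u ^ β) / β) := by
  have hint : IntegrableOn (fun y : ℝ => y ^ (β - 1)) (Ioc u v) volume := by
    have := intervalIntegrable_rpow' (a := u) (b := v) (by linarith : (-1:ℝ) < β - 1)
    rwa [intervalIntegrable_iff_integrableOn_Ioc_of_le huv] at this
  rw [← MeasureTheory.ofReal_integral_eq_lintegral_ofReal hint ?nn]
  case nn =>
    filter_upwards [ae_restrict_mem measurableSet_Ioc] with y hy
    exact Real.rpow_nonneg (le_trans hu hy.1.le) _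
  congr 1
  have h1 : ∫ y in Ioc u v, y ^ (β - 1) = ∫ y in u..v, y ^ (β - 1) :=
    (intervalIntegral.integral_of_le huv).symm
  rw [h1, integral_rpow (Or.inl (by linarith : (-1:ℝ) < β - 1))]
  rw [sub_add_cancel]

/-- Nonincreasing rearrangement of `f : ℝ^n → ℝ`. -/
noncomputable def rearr {n : ℕ} (f : EuclideanSpace ℝ (Fin n) → ℝ) (t : ℝ) : ℝ :=
  sInf {r : ℝ | 0 ≤ r ∧ volume {y | r < |f y|} < ENNReal.ofReal t}

/-- Nonincreasing rearrangement of a function on `(0,∞)` (with Lebesgue measure). -/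
noncomputable def rearrLine (φ : ℝ → ℝ) (t : ℝ) : ℝ :=
  sInf {r : ℝ | 0 ≤ r ∧ volume {y ∈ Ioi (0 : ℝ) | r < |φ y|} < ENNReal.ofReal t}

set_option maxHeartbeats 2000000 in
theorem statement9 (n : ℕ) (hn : 0 < n) :
    ∃ C : ℝ, 0 < C ∧ ∀ a s : ℝ, 0 < a → a < s → s < n →
      ∀ f : EuclideanSpace ℝ (Fin n) → ℝ, Measurable f →
        (∫⁻ r in Ioi (0 : ℝ), ENNReal.ofReal (rearr f r * r ^ (s / n - 1))) < ⊤ →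
        ∫⁻ y in Ioi (0 : ℝ),
            ENNReal.ofReal (rearrLine (fun r => rearr f r * r ^ ((s - a) / n)) y
              * y ^ (a / n - 1))
          ≤ ENNReal.ofReal (C / a) *
              ∫⁻ r in Ioi (0 : ℝ), ENNReal.ofReal (rearr f r * r ^ (s / n - 1)) := by
  have hn0 : (0:ℝ) < n := by exact_mod_cast hn
  refine ⟨8 * n, by positivity, ?_⟩
  intro a s ha has hsn f hf _hfin
  set α := a / n with hαdef
  set σ := s / n with hσdef
  set θ := (s - a) / n with hθdef
  have hs0 : (0:ℝ) < s := lt_trans ha has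
  have hα0 : 0 < α := by rw [hαdef]; positivity
  have hσ0 : 0 < σ := by rw [hσdef]; positivity
  have hσ1 : σ < 1 := (div_lt_one hn0).2 hsn
  have hασ : α < σ := by rw [hαdef, hσdef]; gcongr
  have hα1 : α < 1 := lt_trans hασ hσ1
  have hθ0 : 0 < θ := by
    rw [hθdef]
    have h' : 0 < s - a := by linarith
    positivity
  have hθ1 : θ ≤ 1 := by rw [hθdef, div_le_one hn0]; linarith
  have hαθ : α + θ = σ := by rw [hαdef, hθdef, hσdef]; field_simp; ring
  -- basic notation
  set F := rearr f with hFdef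
  have hF0 : ∀ t, 0 ≤ F t := fun t => Real.sInf_nonneg (fun x hx => hx.1)
  have hFanti : AntitoneOn F (Ioi 0) :=
    antitoneOn_rearrGen volume f
      (fun r => (measurableSet_lt measurable_const hf.abs).nullMeasurableSet)
  set F' := (Ioi (0:ℝ)).indicator F with hF'def
  have hF'm : Measurable F' := measurable_indicator_antitoneOn hF0 hFanti
  have hF'eq : ∀ y : ℝ, 0 < y → F' y = F y := fun y hy => indicator_of_mem hy F
  have hF'0 : ∀ y, 0 ≤ F' y := fun y => by
    by_cases hy : y ∈ Ioi (0:ℝ)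
    · rw [hF'def, indicator_of_mem hy]; exact hF0 y
    · rw [hF'def, indicator_of_notMem hy]
  set φm : ℝ → ℝ := fun r => F r * r ^ θ with hφmdef
  set φ' : ℝ → ℝ := fun r => F' r * r ^ θ with hφ'def
  have hφ'm : Measurable φ' := hF'm.mul (measurable_id.pow_const _)
  have hφeq : ∀ y : ℝ, 0 < y → φ' y = φm y := fun y hy => by
    simp only [hφ'def, hφmdef, hF'eq y hy]
  -- the distribution function of φ on (0,∞)
  set Lam : ℝ → ℝ≥0∞ := fun t => volume ({y | t < |φm y|} ∩ Ioi 0) with hLamdef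
  have hseteq : ∀ r : ℝ, {y ∈ Ioi (0:ℝ) | r < |φm y|} = {y | r < |φm y|} ∩ Ioi 0 := by
    intro r; ext z; simp [mem_inter_iff, and_comm]
  have hμ' : ∀ r : ℝ,
      (volume.restrict (Ioi (0:ℝ))) {y | r < |φm y|} = Lam r := by
    intro r; rw [Measure.restrict_apply' measurableSet_Ioi]
  have hrearrLine_eq : rearrLine φm = fun t =>
      sInf {r : ℝ | 0 ≤ r ∧ (volume.restrict (Ioi (0:ℝ))) {y | r < |φm y|}
        < ENNReal.ofReal t} := by
    funext t
    unfold rearrLine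
    congr 1
    ext r
    simp only [mem_setOf_eq, hμ' r, hseteq r]
    exact Iff.rfl
  have hnullφ : ∀ r : ℝ,
      NullMeasurableSet {y | r < |φm y|} (volume.restrict (Ioi (0:ℝ))) := by
    intro r
    have hB : MeasurableSet {y : ℝ | r < |φ' y|} :=
      measurableSet_lt measurable_const hφ'm.abs
    have hcompl0 : (volume.restrict (Ioi (0:ℝ))) (Ioi (0:ℝ))ᶜ = 0 := by
      rw [Measure.restrict_apply' measurableSet_Ioi, compl_inter_self, measure_empty]
    refine hB.nullMeasurableSet.congr ?_
    rw [MeasureTheory.ae_eq_set]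
    constructor
    · refine measure_mono_null ?_ hcompl0
      intro z hz
      simp only [mem_diff, mem_setOf_eq, mem_compl_iff, mem_Ioi, not_lt] at hz ⊢
      by_contra hzpos
      push_neg at hzpos
      rw [hφeq z hzpos] at hz
      exact absurd hz.1 (not_lt.2 hz.2)
    · refine measure_mono_null ?_ hcompl0
      intro z hz
      simp only [mem_diff, mem_setOf_eq, mem_compl_iff, mem_Ioi, not_lt] at hz ⊢
      by_contra hzpos
      push_neg at hzpos
      rw [← hφeq z hzpos] at hz
      exact absurd hz.1 (not_lt.2 hz.2)
  set G := rearrLine φm with hGdef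
  have hG0 : ∀ t, 0 ≤ G t := fun t => Real.sInf_nonneg (fun x hx => hx.1)
  have hGanti : AntitoneOn G (Ioi 0) := by
    have h := antitoneOn_rearrGen (volume.restrict (Ioi (0:ℝ))) φm hnullφ
    rw [← hrearrLine_eq] at h
    exact h
  set G' := (Ioi (0:ℝ)).indicator G with hG'def
  have hG'm : Measurable G' := measurable_indicator_antitoneOn hG0 hGanti
  have hG'0 : ∀ y, 0 ≤ G' y := fun y => by
    by_cases hy : y ∈ Ioi (0:ℝ)
    · rw [hG'def, indicator_of_mem hy]; exact hG0 y
    · rw [hG'def, indicator_of_notMem hy]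
  have hG2 : ∀ y : ℝ, 0 < y → ∀ t : ℝ, 0 ≤ t → t < G y → ENNReal.ofReal y ≤ Lam t := by
    intro y hy t ht hlt
    by_contra hcon
    push_neg at hcon
    have hmem : t ∈ {r : ℝ | 0 ≤ r ∧ volume {z ∈ Ioi (0:ℝ) | r < |φm z|}
        < ENNReal.ofReal y} := by
      refine ⟨ht, ?_⟩
      rw [hseteq t]
      exact hcon
    have hle := csInf_le ⟨0, fun x hx => hx.1⟩ hmem
    rw [hGdef] at hlt
    unfold rearrLine at hlt
    linarith
  -- the weight measure
  set w : ℝ → ℝ≥0∞ := fun y => ENNReal.ofReal (y ^ (α - 1)) with hwdef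
  have hwm : Measurable w := (measurable_id.pow_const _).ennreal_ofReal
  set ν : Measure ℝ := (volume.restrict (Ioi (0:ℝ))).withDensity w with hνdef
  -- dyadic quantities
  have h2pos : ∀ k : ℤ, (0:ℝ) < 2 ^ k := fun k => zpow_pos (by norm_num) k
  set b : ℤ → ℝ := fun k => F' ((2:ℝ) ^ k) * ((2:ℝ) ^ (k + 1)) ^ θ with hbdef
  set c : ℤ → ℝ := fun k => F' ((2:ℝ) ^ k) * ((2:ℝ) ^ k) ^ σ with hcdef
  set I : ℝ≥0∞ := ∫⁻ r in Ioi (0:ℝ), ENNReal.ofReal (F r * r ^ (σ - 1)) with hIdef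
  -- Step 1: LHS as an integral against ν
  have step1 : (∫⁻ y in Ioi (0:ℝ), ENNReal.ofReal (G y * y ^ (α - 1)))
      = ∫⁻ y, ENNReal.ofReal (G' y) ∂ν := by
    rw [hνdef, lintegral_withDensity_eq_lintegral_mul _ hwm hG'm.ennreal_ofReal]
    refine setLIntegral_congr_fun measurableSet_Ioi ?_
    intro y hy
    simp only [Pi.mul_apply, hwdef]
    rw [hG'def, indicator_of_mem hy, ENNReal.ofReal_mul (hG0 y), mul_comm]
  -- Step 2: layer cake
  have step2 : (∫⁻ y, ENNReal.ofReal (G' y) ∂ν)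
      = ∫⁻ t in Ioi (0:ℝ), ν {y | t < G' y} :=
    lintegral_eq_lintegral_meas_lt ν (ae_of_all _ hG'0) hG'm.aemeasurable
  -- Step 3: pointwise bound on ν of superlevel sets
  have step3 : ∀ t : ℝ, 0 < t →
      ν {y | t < G' y} ≤ (ENNReal.ofReal α)⁻¹ * Lam t ^ α := by
    intro t ht
    by_cases hL : Lam t = ∞
    · rw [hL, ENNReal.top_rpow_of_pos hα0, ENNReal.mul_top]
      · exact le_top
      · simp [ENNReal.inv_eq_zero]
    · have hl0 : 0 ≤ (Lam t).toReal := ENNReal.toReal_nonneg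
      have hsub : {y | t < G' y} ⊆ Ioc 0 (Lam t).toReal := by
        intro y hy
        simp only [mem_setOf_eq] at hy
        by_cases hypos : y ∈ Ioi (0:ℝ)
        · have hty : t < G y := by rwa [hG'def, indicator_of_mem hypos] at hy
          have hle := hG2 y hypos t ht.le hty
          exact ⟨hypos, (ENNReal.ofReal_le_iff_le_toReal hL).1 hle⟩
        · rw [hG'def, indicator_of_notMem hypos] at hy
          exact absurd (lt_trans ht hy) (lt_irrefl 0)
      calc ν {y | t < G' y} ≤ ν (Ioc 0 (Lam t).toReal) := measure_mono hsub
        _ = ∫⁻ y in Ioc 0 (Lam t).toReal, w y ∂(volume.restrict (Ioi (0:ℝ))) := by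
            rw [hνdef, withDensity_apply _ measurableSet_Ioc]
        _ = ∫⁻ y in Ioc 0 (Lam t).toReal, w y := by
            rw [Measure.restrict_restrict measurableSet_Ioc,
              inter_eq_left.2 Ioc_subset_Ioi_self]
        _ = ENNReal.ofReal (((Lam t).toReal ^ α - 0 ^ α) / α) := lint_rpow hα0 le_rfl hl0
        _ = (ENNReal.ofReal α)⁻¹ * Lam t ^ α := by
            rw [Real.zero_rpow hα0.ne', sub_zero, div_eq_mul_inv,
              ENNReal.ofReal_mul (Real.rpow_nonneg hl0 _),
              ENNReal.ofReal_inv_of_pos hα0,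
              ← ENNReal.ofReal_rpow_of_nonneg hl0 hα0.le,
              ENNReal.ofReal_toReal hL, mul_comm]
  -- Step 4: dyadic bound for Lam
  have step4 : ∀ t : ℝ, 0 < t →
      Lam t ≤ ∑' k : ℤ, (Iio (b k)).indicator (fun _ => ENNReal.ofReal ((2:ℝ) ^ k)) t := by
    intro t ht
    set T : ℤ → Set ℝ := fun k =>
      if t < b k then Ico ((2:ℝ) ^ k) ((2:ℝ) ^ (k + 1)) else ∅ with hTdef
    have hincl : {y | t < |φm y|} ∩ Ioi 0 ⊆ ⋃ k : ℤ, T k := by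
      rintro y ⟨hy1, hy2⟩
      simp only [mem_setOf_eq] at hy1
      have hypos : (0:ℝ) < y := hy2
      have hφnn : 0 ≤ φm y := mul_nonneg (hF0 y) (Real.rpow_nonneg hypos.le _)
      rw [abs_of_nonneg hφnn] at hy1
      set k : ℤ := Int.log 2 y with hkdef
      have hk1 : (2:ℝ) ^ k ≤ y := by
        have h := Int.zpow_log_le_self (b := 2) (r := y) one_lt_two hypos
        exact_mod_cast h
      have hk2 : y < (2:ℝ) ^ (k + 1) := by
        have h := Int.lt_zpow_succ_log_self (b := 2) one_lt_two y
        exact_mod_cast h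
      have hFle : F y ≤ F ((2:ℝ) ^ k) := hFanti (h2pos k) hypos hk1
      have hrle : y ^ θ ≤ ((2:ℝ) ^ (k + 1)) ^ θ :=
        Real.rpow_le_rpow hypos.le hk2.le hθ0.le
      have htb : t < b k := by
        rw [hbdef]
        have hmm : φm y ≤ F ((2:ℝ) ^ k) * ((2:ℝ) ^ (k + 1)) ^ θ :=
          mul_le_mul hFle hrle (Real.rpow_nonneg hypos.le _) (hF0 _)
        simp only []
        rw [hF'eq _ (h2pos k)]
        exact lt_of_lt_of_le hy1 hmm
      refine mem_iUnion.2 ⟨k, ?_⟩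
      simp only [hTdef, if_pos htb]
      exact ⟨hk1, hk2⟩
    have hTvol : ∀ k : ℤ, volume (T k)
        = (Iio (b k)).indicator (fun _ => ENNReal.ofReal ((2:ℝ) ^ k)) t := by
      intro k
      simp only [hTdef]
      by_cases htk : t < b k
      · rw [if_pos htk, indicator_of_mem (mem_Iio.2 htk), Real.volume_Ico]
        congr 1
        have h21 : (2:ℝ) ^ (k + 1) = 2 ^ k * 2 := by
          rw [zpow_add_one₀ (by norm_num : (2:ℝ) ≠ 0)]
        rw [h21]; ring
      · rw [if_neg htk, indicator_of_notMem (fun h => htk (mem_Iio.1 h)), measure_empty]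
    calc Lam t ≤ volume (⋃ k : ℤ, T k) := measure_mono hincl
      _ ≤ ∑' k : ℤ, volume (T k) := measure_iUnion_le T
      _ = _ := tsum_congr hTvol
  -- Step 5: integrate the dyadic bound
  have step5 : (∫⁻ t in Ioi (0:ℝ), Lam t ^ α)
      ≤ ∑' k : ℤ, (ENNReal.ofReal ((2:ℝ) ^ k)) ^ α * ENNReal.ofReal (b k) := by
    have hpt : ∀ t : ℝ, t ∈ Ioi (0:ℝ) → Lam t ^ α ≤
        ∑' k : ℤ, (Iio (b k)).indicator
          (fun _ => (ENNReal.ofReal ((2:ℝ) ^ k)) ^ α) t := by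
      intro t ht
      calc Lam t ^ α
          ≤ (∑' k : ℤ, (Iio (b k)).indicator
              (fun _ => ENNReal.ofReal ((2:ℝ) ^ k)) t) ^ α :=
            ENNReal.rpow_le_rpow (step4 t ht) hα0.le
        _ ≤ ∑' k : ℤ, ((Iio (b k)).indicator
              (fun _ => ENNReal.ofReal ((2:ℝ) ^ k)) t) ^ α :=
            tsum_rpow_le _ hα0 hα1.le
        _ = ∑' k : ℤ, (Iio (b k)).indicator
              (fun _ => (ENNReal.ofReal ((2:ℝ) ^ k)) ^ α) t := by
            refine tsum_congr fun k => ?_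
            by_cases htk : t ∈ Iio (b k)
            · rw [indicator_of_mem htk, indicator_of_mem htk]
            · rw [indicator_of_notMem htk, indicator_of_notMem htk,
                ENNReal.zero_rpow_of_pos hα0]
    calc (∫⁻ t in Ioi (0:ℝ), Lam t ^ α)
        ≤ ∫⁻ t in Ioi (0:ℝ), ∑' k : ℤ, (Iio (b k)).indicator
            (fun _ => (ENNReal.ofReal ((2:ℝ) ^ k)) ^ α) t := by
          refine lintegral_mono_ae ?_
          filter_upwards [ae_restrict_mem measurableSet_Ioi] with t ht
          exact hpt t ht
      _ = ∑' k : ℤ, ∫⁻ t in Ioi (0:ℝ), (Iio (b k)).indicator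
            (fun _ => (ENNReal.ofReal ((2:ℝ) ^ k)) ^ α) t :=
          lintegral_tsum (fun k =>
            (measurable_const.indicator measurableSet_Iio).aemeasurable)
      _ ≤ ∑' k : ℤ, (ENNReal.ofReal ((2:ℝ) ^ k)) ^ α * ENNReal.ofReal (b k) := by
          refine ENNReal.tsum_le_tsum fun k => ?_
          rw [lintegral_indicator measurableSet_Iio, setLIntegral_const,
            Measure.restrict_apply measurableSet_Iio, Iio_inter_Ioi,
            Real.volume_Ioo, sub_zero]
  -- Step 6: per-k comparison with c
  have step6 : ∀ k : ℤ, (ENNReal.ofReal ((2:ℝ) ^ k)) ^ α * ENNReal.ofReal (b k)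
      ≤ ENNReal.ofReal 2 * ENNReal.ofReal (c k) := by
    intro k
    have harith : ((2:ℝ) ^ k) ^ α * b k ≤ 2 * c k := by
      rw [hbdef, hcdef]
      simp only []
      have h1 : ((2:ℝ) ^ (k + 1)) ^ θ = ((2:ℝ) ^ k) ^ θ * 2 ^ θ := by
        rw [zpow_add_one₀ (by norm_num : (2:ℝ) ≠ 0),
          Real.mul_rpow (h2pos k).le (by norm_num)]
      have h2 : ((2:ℝ) ^ k) ^ α * ((2:ℝ) ^ k) ^ θ = ((2:ℝ) ^ k) ^ σ := by
        rw [← Real.rpow_add (h2pos k), hαθ]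
      have h3 : (2:ℝ) ^ θ ≤ 2 := by
        have h := Real.rpow_le_rpow_of_exponent_le (by norm_num : (1:ℝ) ≤ 2) hθ1
        rwa [Real.rpow_one] at h
      calc ((2:ℝ) ^ k) ^ α * (F' (2 ^ k) * ((2:ℝ) ^ (k + 1)) ^ θ)
          = (F' (2 ^ k) * (((2:ℝ) ^ k) ^ α * ((2:ℝ) ^ k) ^ θ)) * 2 ^ θ := by
            rw [h1]; ring
        _ = (F' (2 ^ k) * ((2:ℝ) ^ k) ^ σ) * 2 ^ θ := by rw [h2]
        _ ≤ (F' (2 ^ k) * ((2:ℝ) ^ k) ^ σ) * 2 := by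
            apply mul_le_mul_of_nonneg_left h3
            exact mul_nonneg (hF'0 _) (Real.rpow_nonneg (h2pos k).le _)
        _ = 2 * (F' (2 ^ k) * ((2:ℝ) ^ k) ^ σ) := by ring
    have hbnn : 0 ≤ b k := by
      rw [hbdef]; exact mul_nonneg (hF'0 _) (Real.rpow_nonneg (h2pos _).le _)
    calc (ENNReal.ofReal ((2:ℝ) ^ k)) ^ α * ENNReal.ofReal (b k)
        = ENNReal.ofReal (((2:ℝ) ^ k) ^ α * b k) := by
          rw [ENNReal.ofReal_rpow_of_nonneg (h2pos k).le hα0.le,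
            ← ENNReal.ofReal_mul (Real.rpow_nonneg (h2pos k).le _)]
      _ ≤ ENNReal.ofReal (2 * c k) := ENNReal.ofReal_le_ofReal harith
      _ = ENNReal.ofReal 2 * ENNReal.ofReal (c k) := ENNReal.ofReal_mul (by norm_num)
  -- κ and its bound
  set κ : ℝ := (1 - 2 ^ (-σ)) / σ with hκdef
  have h2σlt : (2:ℝ) ^ (-σ) < 1 := by
    rw [← Real.rpow_zero 2]
    exact Real.rpow_lt_rpow_of_exponent_lt (by norm_num) (by linarith)
  have hκ0 : 0 < κ := div_pos (by linarith) hσ0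
  have hκ4 : κ⁻¹ ≤ 4 := by
    have hlog2 : (0.6931471803:ℝ) < Real.log 2 := Real.log_two_gt_d9
    set x := σ * Real.log 2 with hxdef
    have hx0 : 0 < x := mul_pos hσ0 (by linarith)
    have hxle : x ≤ Real.log 2 := by nlinarith
    have hexp1 : x + 1 ≤ Real.exp x := by
      have := Real.add_one_le_exp x; linarith
    have hA2 : (1:ℝ)/2 ≤ Real.exp (-x) := by
      rw [Real.exp_neg]
      have hle2 : Real.exp x ≤ 2 := by
        calc Real.exp x ≤ Real.exp (Real.log 2) := Real.exp_le_exp.2 hxle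
          _ = 2 := Real.exp_log (by norm_num)
      nlinarith [Real.exp_pos x, mul_inv_cancel₀ (Real.exp_pos x).ne',
        inv_nonneg.2 (Real.exp_pos x).le]
    have h3 : (2:ℝ) ^ (-σ) = Real.exp (-x) := by
      rw [Real.rpow_def_of_pos (by norm_num : (0:ℝ) < 2)]
      congr 1
      rw [hxdef]; ring
    have hA1 : (x + 1) * Real.exp (-x) ≤ 1 := by
      have hmul := mul_le_mul_of_nonneg_right hexp1 (Real.exp_pos (-x)).le
      have hcancel : Real.exp x * Real.exp (-x) = 1 := by
        rw [← Real.exp_add]; simp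
      linarith [hmul, hcancel.le, hcancel.ge]
    have h4 : x * Real.exp (-x) ≤ 1 - Real.exp (-x) := by
      have hring : (x + 1) * Real.exp (-x) = x * Real.exp (-x) + Real.exp (-x) := by ring
      linarith
    have h5 : x / 2 ≤ 1 - Real.exp (-x) := by
      have h5' := mul_le_mul_of_nonneg_left hA2 hx0.le
      linarith
    have h6 : σ ≤ 2 * x := by
      have hx' : 2 * x - σ = σ * (2 * Real.log 2 - 1) := by rw [hxdef]; ring
      nlinarith [mul_pos hσ0 (show (0:ℝ) < 2 * Real.log 2 - 1 by linarith)]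
    rw [hκdef, inv_div, div_le_iff₀ (by rw [h3]; linarith : (0:ℝ) < 1 - 2 ^ (-σ))]
    rw [h3]
    linarith
  -- Step 7: lower bound for I by partial sums of c
  have hIc : ∀ fs : Finset ℤ, (∑ k ∈ fs, ENNReal.ofReal (κ * c k)) ≤ I := by
    intro fs
    have hterm : ∀ k : ℤ, ENNReal.ofReal (κ * c k)
        = ∫⁻ r in Ico ((2:ℝ) ^ (k - 1)) ((2:ℝ) ^ k),
            ENNReal.ofReal (F' ((2:ℝ) ^ k) * r ^ (σ - 1)) := by
      intro k
      rw [setLIntegral_congr (Ico_ae_eq_Ioc (μ := volume)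
        (a := (2:ℝ) ^ (k - 1)) (b := (2:ℝ) ^ k))]
      have hpull : (∫⁻ r in Ioc ((2:ℝ) ^ (k - 1)) ((2:ℝ) ^ k),
          ENNReal.ofReal (F' ((2:ℝ) ^ k) * r ^ (σ - 1)))
          = ENNReal.ofReal (F' ((2:ℝ) ^ k)) *
            ∫⁻ r in Ioc ((2:ℝ) ^ (k - 1)) ((2:ℝ) ^ k), ENNReal.ofReal (r ^ (σ - 1)) := by
        rw [← lintegral_const_mul' _ _ ENNReal.ofReal_ne_top]
        refine lintegral_congr fun r => ?_
        rw [← ENNReal.ofReal_mul (hF'0 _)]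
      rw [hpull, lint_rpow hσ0 (h2pos (k - 1)).le
        (zpow_le_zpow_right₀ (by norm_num) (by omega))]
      rw [← ENNReal.ofReal_mul (hF'0 _)]
      congr 1
      have hz : ((2:ℝ) ^ (k - 1)) ^ σ = ((2:ℝ) ^ k) ^ σ * 2 ^ (-σ) := by
        have : (2:ℝ) ^ (k - 1) = 2 ^ k * 2⁻¹ := by
          rw [zpow_sub_one₀ (by norm_num : (2:ℝ) ≠ 0)]
        rw [this, Real.mul_rpow (h2pos k).le (by norm_num),
          Real.inv_rpow (by norm_num : (0:ℝ) ≤ 2), ← Real.rpow_neg (by norm_num)]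
      rw [hcdef, hκdef]
      simp only []
      rw [hz]
      field_simp
    have hmono : ∀ k : ℤ, (∫⁻ r in Ico ((2:ℝ) ^ (k - 1)) ((2:ℝ) ^ k),
        ENNReal.ofReal (F' ((2:ℝ) ^ k) * r ^ (σ - 1)))
        ≤ ∫⁻ r in Ico ((2:ℝ) ^ (k - 1)) ((2:ℝ) ^ k),
            ENNReal.ofReal (F' r * r ^ (σ - 1)) := by
      intro k
      refine setLIntegral_mono
        ((hF'm.mul (measurable_id.pow_const _)).ennreal_ofReal) ?_
      intro r hr
      have hrpos : 0 < r := lt_of_lt_of_le (h2pos (k - 1)) hr.1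
      have hFle : F' ((2:ℝ) ^ k) ≤ F' r := by
        rw [hF'eq _ (h2pos k), hF'eq _ hrpos]
        exact hFanti hrpos (h2pos k) hr.2.le
      exact ENNReal.ofReal_le_ofReal
        (mul_le_mul_of_nonneg_right hFle (Real.rpow_nonneg hrpos.le _))
    have hdisj : (↑fs : Set ℤ).PairwiseDisjoint
        (fun k : ℤ => Ico ((2:ℝ) ^ (k - 1)) ((2:ℝ) ^ k)) := by
      have hd : ∀ j k : ℤ, j < k →
          Disjoint (Ico ((2:ℝ) ^ (j - 1)) ((2:ℝ) ^ j))
            (Ico ((2:ℝ) ^ (k - 1)) ((2:ℝ) ^ k)) := by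
        intro j k hjk
        refine Set.disjoint_left.2 ?_
        rintro x ⟨-, hx2⟩ ⟨hx3, -⟩
        have hle : (2:ℝ) ^ j ≤ (2:ℝ) ^ (k - 1) :=
          zpow_le_zpow_right₀ (by norm_num) (by omega)
        linarith
      intro j hj k hk hjk
      rcases hjk.lt_or_gt with h | h
      · exact hd j k h
      · exact (hd k j h).symm
    calc (∑ k ∈ fs, ENNReal.ofReal (κ * c k))
        = ∑ k ∈ fs, ∫⁻ r in Ico ((2:ℝ) ^ (k - 1)) ((2:ℝ) ^ k),
            ENNReal.ofReal (F' ((2:ℝ) ^ k) * r ^ (σ - 1)) :=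
          Finset.sum_congr rfl fun k _ => hterm k
      _ ≤ ∑ k ∈ fs, ∫⁻ r in Ico ((2:ℝ) ^ (k - 1)) ((2:ℝ) ^ k),
            ENNReal.ofReal (F' r * r ^ (σ - 1)) :=
          Finset.sum_le_sum fun k _ => hmono k
      _ = ∫⁻ r in ⋃ k ∈ fs, Ico ((2:ℝ) ^ (k - 1)) ((2:ℝ) ^ k),
            ENNReal.ofReal (F' r * r ^ (σ - 1)) :=
          (lintegral_biUnion_finset hdisj (fun k _ => measurableSet_Ico) _).symm
      _ ≤ ∫⁻ r in Ioi (0:ℝ), ENNReal.ofReal (F' r * r ^ (σ - 1)) := by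
          refine lintegral_mono_set ?_
          refine iUnion₂_subset fun k _ => ?_
          intro x hx
          exact lt_of_lt_of_le (h2pos (k - 1)) hx.1
      _ = I := by
          rw [hIdef]
          refine setLIntegral_congr_fun measurableSet_Ioi ?_
          intro r hr
          simp only [hF'eq r hr]
  have step7 : (∑' k : ℤ, ENNReal.ofReal (c k)) ≤ ENNReal.ofReal 4 * I := by
    have h1 : (∑' k : ℤ, ENNReal.ofReal (κ * c k)) ≤ I := by
      rw [ENNReal.tsum_eq_iSup_sum]
      exact iSup_le hIc
    have h2 : (∑' k : ℤ, ENNReal.ofReal (κ * c k))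
        = ENNReal.ofReal κ * ∑' k : ℤ, ENNReal.ofReal (c k) := by
      calc (∑' k : ℤ, ENNReal.ofReal (κ * c k))
          = ∑' k : ℤ, ENNReal.ofReal κ * ENNReal.ofReal (c k) :=
            tsum_congr fun k => ENNReal.ofReal_mul hκ0.le
        _ = ENNReal.ofReal κ * ∑' k : ℤ, ENNReal.ofReal (c k) :=
            ENNReal.tsum_mul_left
    rw [h2] at h1
    have hκne0 : ENNReal.ofReal κ ≠ 0 := (ENNReal.ofReal_pos.2 hκ0).ne'
    have h1' : (∑' k : ℤ, ENNReal.ofReal (c k)) * ENNReal.ofReal κ ≤ I := by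
      rwa [mul_comm] at h1
    have hdiv := (ENNReal.le_div_iff_mul_le (Or.inl hκne0)
      (Or.inl ENNReal.ofReal_ne_top)).2 h1'
    calc (∑' k : ℤ, ENNReal.ofReal (c k)) ≤ I / ENNReal.ofReal κ := hdiv
      _ = I * (ENNReal.ofReal κ)⁻¹ := by rw [div_eq_mul_inv]
      _ = I * ENNReal.ofReal κ⁻¹ := by rw [ENNReal.ofReal_inv_of_pos hκ0]
      _ ≤ I * ENNReal.ofReal 4 := mul_le_mul_right (ENNReal.ofReal_le_ofReal hκ4) I
      _ = ENNReal.ofReal 4 * I := mul_comm _ _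
  -- assemble everything
  calc (∫⁻ y in Ioi (0:ℝ), ENNReal.ofReal (G y * y ^ (α - 1)))
      = ∫⁻ t in Ioi (0:ℝ), ν {y | t < G' y} := by rw [step1, step2]
    _ ≤ ∫⁻ t in Ioi (0:ℝ), (ENNReal.ofReal α)⁻¹ * Lam t ^ α := by
        refine lintegral_mono_ae ?_
        filter_upwards [ae_restrict_mem measurableSet_Ioi] with t ht
        exact step3 t ht
    _ = (ENNReal.ofReal α)⁻¹ * ∫⁻ t in Ioi (0:ℝ), Lam t ^ α :=
        lintegral_const_mul' _ _ (ENNReal.inv_ne_top.2 (ENNReal.ofReal_pos.2 hα0).ne')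
    _ ≤ (ENNReal.ofReal α)⁻¹ *
        ∑' k : ℤ, (ENNReal.ofReal ((2:ℝ) ^ k)) ^ α * ENNReal.ofReal (b k) :=
        mul_le_mul_right step5 _
    _ ≤ (ENNReal.ofReal α)⁻¹ *
        ∑' k : ℤ, ENNReal.ofReal 2 * ENNReal.ofReal (c k) :=
        mul_le_mul_right (ENNReal.tsum_le_tsum step6) _
    _ = (ENNReal.ofReal α)⁻¹ *
        (ENNReal.ofReal 2 * ∑' k : ℤ, ENNReal.ofReal (c k)) := by
        rw [ENNReal.tsum_mul_left]
    _ ≤ (ENNReal.ofReal α)⁻¹ * (ENNReal.ofReal 2 * (ENNReal.ofReal 4 * I)) :=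
        mul_le_mul_right (mul_le_mul_right step7 _) _
    _ = ENNReal.ofReal (8 * n / a) * I := by
        rw [← ENNReal.ofReal_inv_of_pos hα0]
        rw [← mul_assoc, ← mul_assoc, ← ENNReal.ofReal_mul (by positivity),
          ← ENNReal.ofReal_mul (by positivity)]
        congr 2
        rw [hαdef]
        field_simp
        ring
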